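/- arXiv:2304.04827 — 4 statements merged into one kernel-verified Lean document; each statement's English description precedes it below -/
import Mathlib

section
/- If σ : G_K → G_S is a surjective full scale-measure from context K to context S, then the map A ↦ σ⁻¹(A) is an order isomorphism between (Ext(S), ⊆) and (Ext(K), ⊆). -/
def extentOf {G M : Type*} (I : G → M → Prop) (B : Set M) : Set G :=
  {g | ∀ m ∈ B, I g m}

def IsExtent {G M : Type*} (I : G → M → Prop) (X : Set G) : Prop :=
  ∃ B : Set M, X = extentOf I B

def IsScaleMeasure {GK MK GS MS : Type*} (IK : GK → MK → Prop)
    (IS : GS → MS → Prop) (σ : GK → GS) : Prop :=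
  ∀ A : Set GS, IsExtent IS A → IsExtent IK (σ ⁻¹' A)

/-- `σ` is a full scale-measure: additionally every extent of `K` is the
preimage of an extent of `S`. -/
def IsFullScaleMeasure {GK MK GS MS : Type*} (IK : GK → MK → Prop)
    (IS : GS → MS → Prop) (σ : GK → GS) : Prop :=
  IsScaleMeasure IK IS σ ∧
    ∀ X : Set GK, IsExtent IK X → ∃ A : Set GS, IsExtent IS A ∧ σ ⁻¹' A = X

/-- For a surjective full scale-measure `σ`, the preimage map `A ↦ σ⁻¹(A)` is an
order isomorphism between `(Ext(S), ⊆)` and `(Ext(K), ⊆)`. -/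
theorem fullScaleMeasure_orderIso {GK MK GS MS : Type*}
    (IK : GK → MK → Prop) (IS : GS → MS → Prop) (σ : GK → GS)
    (hsurj : Function.Surjective σ) (hfull : IsFullScaleMeasure IK IS σ) :
    ∃ e : {A : Set GS // IsExtent IS A} ≃o {X : Set GK // IsExtent IK X},
      ∀ A : {A : Set GS // IsExtent IS A}, (e A : Set GK) = σ ⁻¹' (A : Set GS) := by
  set φ : {A : Set GS // IsExtent IS A} → {X : Set GK // IsExtent IK X} :=
    fun A => ⟨σ ⁻¹' (A : Set GS), hfull.1 A A.2⟩ with hφ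
  have hbij : Function.Bijective φ := by
    constructor
    · intro A B h
      apply Subtype.ext
      have := congrArg Subtype.val h
      exact Set.preimage_injective.2 hsurj this
    · rintro ⟨X, hX⟩
      obtain ⟨A, hA, hAX⟩ := hfull.2 X hX
      exact ⟨⟨A, hA⟩, Subtype.ext hAX⟩
  refine ⟨⟨Equiv.ofBijective φ hbij, ?_⟩, fun A => rfl⟩
  intro A B
  simp only [Equiv.ofBijective_apply, hφ]
  constructor
  · intro h
    exact (Set.preimage_subset_preimage_iff (by simp [hsurj.range_eq])).1 h
  · exact fun h => Set.preimage_mono h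
end

section
/- Let σ be a surjective full scale-measure from formal context K = (G_K, M_K, I_K) to scale S. Then for any H ⊆ G_K, the restriction σ|_H is a surjective full scale-measure from the induced subcontext K[H, M_K] to the induced subcontext S[σ(H), M_S]. -/
/-- Extents of the induced subcontext on the object set `H` (full attribute set). -/
def IsExtentSub {G M : Type*} (I : G → M → Prop) (H : Set G) (X : Set G) : Prop :=
  ∃ B : Set M, X = {g | g ∈ H ∧ ∀ m ∈ B, I g m}

/-- Heredity of full scale-measures: if `σ` is a surjective full scale-measure
from `K` to `S`, then for every `H ⊆ G_K` the restriction `σ|_H` is a surjective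
full scale-measure from the induced subcontext `K[H, M_K]` to `S[σ(H), M_S]`. -/
theorem heredity_full_scaleMeasure {GK MK GS MS : Type*}
    (IK : GK → MK → Prop) (IS : GS → MS → Prop) (σ : GK → GS)
    (hsurj : Function.Surjective σ) (hfull : IsFullScaleMeasure IK IS σ)
    (H : Set GK) :
    -- `σ|_H : H → σ(H)` is surjective
    (∀ y ∈ σ '' H, ∃ g ∈ H, σ g = y) ∧
    -- `σ|_H` is a scale-measure from `K[H, M_K]` to `S[σ(H), M_S]`
    (∀ C : Set GS, IsExtentSub IS (σ '' H) C →
      IsExtentSub IK H (H ∩ σ ⁻¹' C)) ∧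
    -- `σ|_H` is full
    (∀ D : Set GK, IsExtentSub IK H D →
      ∃ C : Set GS, IsExtentSub IS (σ '' H) C ∧ H ∩ σ ⁻¹' C = D) := by
  refine ⟨fun y hy => by rcases hy with ⟨g, hg, rfl⟩; exact ⟨g, hg, rfl⟩, ?_, ?_⟩
  · rintro C ⟨B, rfl⟩
    obtain ⟨B', hB'⟩ := hfull.1 (extentOf IS B) ⟨B, rfl⟩
    refine ⟨B', ?_⟩
    ext g
    constructor
    · rintro ⟨hg, hC⟩
      have h2 : g ∈ σ ⁻¹' extentOf IS B := fun m hm => hC.2 m hm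
      rw [hB'] at h2
      exact ⟨hg, h2⟩
    · rintro ⟨hg, hI⟩
      exact ⟨hg, ⟨g, hg, rfl⟩, by
        have : g ∈ σ ⁻¹' extentOf IS B := by rw [hB']; exact hI
        exact this⟩
  · rintro D ⟨B, rfl⟩
    obtain ⟨A, ⟨BA, rfl⟩, hA⟩ := hfull.2 (extentOf IK B) ⟨B, rfl⟩
    refine ⟨σ '' H ∩ extentOf IS BA, ⟨BA, by ext y; simp [extentOf]⟩, ?_⟩
    ext g
    constructor
    · rintro ⟨hg, _, hgA⟩
      refine ⟨hg, ?_⟩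
      have : g ∈ σ ⁻¹' extentOf IS BA := hgA
      rw [hA] at this; exact this
    · rintro ⟨hg, hI⟩
      refine ⟨hg, ⟨g, hg, rfl⟩, ?_⟩
      have : g ∈ σ ⁻¹' extentOf IS BA := by rw [hA]; exact hI
      exact this
end

section
/- For n ≥ 3, the crown scale C_n = ([n], [n], J), where (a,b) ∈ J iff a = b or b = a + 1 or (a,b) = (n,1), has as extents exactly: the empty set, all singletons {k}, all incidence pairs {a, a+1} (indices mod n), and [n]. Hence C_n has 2n + 2 extents. -/
/-- The crown incidence on `Fin n`: each element is related to itself and its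
cyclic successor (`a + 1` in `Fin n` wraps around, covering `(n, 1)`). -/
def crownRel (n : ℕ) [NeZero n] (a b : Fin n) : Prop :=
  a = b ∨ b = a + 1

section aux

variable {n : ℕ} [NeZero n]

lemma crown_one_ne_zero (hn : 3 ≤ n) : (1 : Fin n) ≠ 0 := by
  simp [Fin.ext_iff, Fin.val_one', Nat.mod_eq_of_lt (by omega : 1 < n)]

lemma crown_two_ne_zero (hn : 3 ≤ n) : (2 : Fin n) ≠ 0 := by
  have h : (2 : Fin n) = 1 + 1 := by open Fin.CommRing in norm_num
  rw [h]
  simp [Fin.ext_iff, Fin.val_add, Fin.val_one', Nat.mod_eq_of_lt (by omega : 1 < n),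
    Nat.mod_eq_of_lt (by omega : 2 < n)]

lemma crown_add_one_ne (hn : 3 ≤ n) (a : Fin n) : a + 1 ≠ a := by
  intro h
  exact crown_one_ne_zero hn (by
    have := h.trans (add_zero a).symm
    exact add_left_cancel this)

lemma crown_add_two_ne (hn : 3 ≤ n) (a : Fin n) : a + 2 ≠ a := by
  intro h
  exact crown_two_ne_zero hn (by
    have := h.trans (add_zero a).symm
    exact add_left_cancel this)

lemma crown_mem_extent (B : Set (Fin n)) (g : Fin n) :
    g ∈ extentOf (crownRel n) B ↔ ∀ m ∈ B, m = g ∨ m = g + 1 := by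
  unfold extentOf crownRel
  simp only [Set.mem_setOf_eq]
  constructor
  · intro h m hm; rcases h m hm with h' | h'
    · exact Or.inl h'.symm
    · exact Or.inr h'
  · intro h m hm; rcases h m hm with h' | h'
    · exact Or.inl h'.symm
    · exact Or.inr h'

lemma crown_pair_inj (hn : 3 ≤ n) {a b : Fin n}
    (h : ({a, a + 1} : Set (Fin n)) = {b, b + 1}) : a = b := by
  have ha : a ∈ ({b, b + 1} : Set (Fin n)) := h ▸ (by simp)
  have hb : b ∈ ({a, a + 1} : Set (Fin n)) := h ▸ (by simp)
  rcases ha with ha | ha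
  · exact ha
  · rcases hb with hb | hb
    · exact hb.symm
    · exfalso
      have ha' : a = b + 1 := ha
      have hb' : b = a + 1 := hb
      have : a + 2 = a := by
        calc a + 2 = a + 1 + 1 := by open Fin.CommRing in ring
        _ = b + 1 := by rw [← hb']
        _ = a := ha'.symm
      exact crown_add_two_ne hn a this

end aux

/-- For `n ≥ 3`, the crown scale `C_n` has as extents exactly the empty set,
the singletons, the pairs `{a, a+1}` (cyclically), and `[n]`; hence it has
`2n + 2` extents. -/
theorem crown_scale_extents (n : ℕ) [NeZero n] (hn : 3 ≤ n) :
    (∀ X : Set (Fin n), IsExtent (crownRel n) X ↔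
      X = ∅ ∨ (∃ k : Fin n, X = {k}) ∨ (∃ a : Fin n, X = {a, a + 1}) ∨
        X = Set.univ) ∧
    {X : Set (Fin n) | IsExtent (crownRel n) X}.ncard = 2 * n + 2 := by
  have h1 := crown_one_ne_zero (n := n) hn
  have h2 := crown_two_ne_zero (n := n) hn
  have main : ∀ X : Set (Fin n), IsExtent (crownRel n) X ↔
      X = ∅ ∨ (∃ k : Fin n, X = {k}) ∨ (∃ a : Fin n, X = {a, a + 1}) ∨
        X = Set.univ := by
    intro X
    constructor
    · rintro ⟨B, rfl⟩
      by_cases hB : B = ∅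
      · subst hB
        right; right; right
        ext g; simp [crown_mem_extent]
      · obtain ⟨m, hm⟩ := Set.nonempty_iff_ne_empty.mpr hB
        have hsub : extentOf (crownRel n) B ⊆ {m - 1, m} := by
          intro g hg
          rcases (crown_mem_extent B g).mp hg m hm with h | h
          · right; exact h.symm
          · left; rw [h]; open Fin.CommRing in ring
        by_cases hA : m - 1 ∈ extentOf (crownRel n) B <;>
          by_cases hC : m ∈ extentOf (crownRel n) B
        · right; right; left
          refine ⟨m - 1, ?_⟩
          have : m - 1 + 1 = m := by open Fin.CommRing in ring
          rw [this]
          apply Set.Subset.antisymm hsub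
          intro x hx
          rcases hx with hx | hx
          · rw [hx]; exact hA
          · rw [hx]; exact hC
        · right; left
          refine ⟨m - 1, ?_⟩
          apply Set.Subset.antisymm
          · intro x hx
            rcases hsub hx with h | h
            · exact h
            · exact absurd (h ▸ hx) hC
          · intro x hx
            rw [hx]; exact hA
        · right; left
          refine ⟨m, ?_⟩
          apply Set.Subset.antisymm
          · intro x hx
            rcases hsub hx with h | h
            · exact absurd (h ▸ hx) hA
            · exact h
          · intro x hx
            rw [hx]; exact hC
        · left
          ext x
          simp only [Set.mem_empty_iff_false, iff_false]
          intro hx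
          rcases hsub hx with h | h
          · exact hA (h ▸ hx)
          · exact hC (h ▸ hx)
    · rintro (rfl | ⟨k, rfl⟩ | ⟨a, rfl⟩ | rfl)
      · refine ⟨Set.univ, ?_⟩
        ext g
        simp only [Set.mem_empty_iff_false, false_iff, crown_mem_extent]
        intro h
        rcases h (g + 2) (Set.mem_univ _) with h' | h'
        · exact crown_add_two_ne hn g h'
        · have : g + 1 + 1 = g + 1 := by
            rw [show g + 1 + 1 = g + 2 from by open Fin.CommRing in ring]; exact h'
          exact crown_add_one_ne hn (g + 1) this
      · refine ⟨{k, k + 1}, ?_⟩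
        ext g
        symm
        constructor
        · intro hg
          have h := (crown_mem_extent _ g).mp hg
          have hk : k = g ∨ k = g + 1 := h k (by simp)
          have hk1 : k + 1 = g ∨ k + 1 = g + 1 := h (k + 1) (by simp)
          rcases hk with rfl | hk
          · exact rfl
          · exfalso
            rcases hk1 with h' | h'
            · have : g + 2 = g := by
                calc g + 2 = g + 1 + 1 := by open Fin.CommRing in ring
                _ = k + 1 := by rw [hk]
                _ = g := h'
              exact crown_add_two_ne hn g this
            · have hkg : k = g := add_right_cancel h'
              have : g + 1 = g := by rw [← hk, hkg]
              exact crown_add_one_ne hn g this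
        · intro hg
          have hg' : g = k := hg
          subst hg'
          apply (crown_mem_extent _ _).mpr
          intro m hm
          simp only [Set.mem_insert_iff, Set.mem_singleton_iff] at hm
          rcases hm with rfl | rfl
          · exact Or.inl rfl
          · exact Or.inr rfl
      · refine ⟨{a + 1}, ?_⟩
        ext g
        symm
        constructor
        · intro hg
          have h := (crown_mem_extent _ g).mp hg (a + 1) rfl
          rcases h with h | h
          · exact Or.inr h.symm
          · exact Or.inl (add_right_cancel h).symm
        · intro hg
          apply (crown_mem_extent _ _).mpr
          intro m hm
          have hm' : m = a + 1 := hm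
          subst hm'
          rcases hg with h | h
          · have hga : g = a := h
            subst hga; exact Or.inr rfl
          · have hga : g = a + 1 := h
            subst hga; exact Or.inl rfl
      · exact ⟨∅, by ext g; simp [crown_mem_extent]⟩
  refine ⟨main, ?_⟩
  have hEq : {X : Set (Fin n) | IsExtent (crownRel n) X} =
      insert ∅ (insert Set.univ
        (Set.range (fun k : Fin n => ({k} : Set (Fin n))) ∪
         Set.range (fun a : Fin n => ({a, a + 1} : Set (Fin n))))) := by
    ext X
    rw [Set.mem_setOf_eq, main X]
    simp only [Set.mem_insert_iff, Set.mem_union, Set.mem_range]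
    tauto
  rw [hEq]
  have hne : (Fin n) → True := fun _ => trivial
  have h0 : (0 : Fin n) ≠ 1 := fun h => h1 h.symm
  -- cardinalities of the ranges
  have hinj1 : Function.Injective (fun k : Fin n => ({k} : Set (Fin n))) :=
    fun a b h => Set.singleton_eq_singleton_iff.mp h
  have hinj2 : Function.Injective (fun a : Fin n => ({a, a + 1} : Set (Fin n))) :=
    fun a b h => crown_pair_inj hn h
  have hc1 : (Set.range (fun k : Fin n => ({k} : Set (Fin n)))).ncard = n := by
    rw [← Nat.card_coe_set_eq, Nat.card_range_of_injective hinj1, Nat.card_eq_fintype_card,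
      Fintype.card_fin]
  have hc2 : (Set.range (fun a : Fin n => ({a, a + 1} : Set (Fin n)))).ncard = n := by
    rw [← Nat.card_coe_set_eq, Nat.card_range_of_injective hinj2, Nat.card_eq_fintype_card,
      Fintype.card_fin]
  have hdisj : Disjoint (Set.range (fun k : Fin n => ({k} : Set (Fin n))))
      (Set.range (fun a : Fin n => ({a, a + 1} : Set (Fin n)))) := by
    rw [Set.disjoint_left]
    rintro X ⟨k, rfl⟩ ⟨a, ha⟩
    have ha' : ({a, a + 1} : Set (Fin n)) = {k} := ha
    have h' : a + 1 = a := by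
      have hak : a = k := by
        have : a ∈ ({k} : Set (Fin n)) := by rw [← ha']; simp
        exact this
      have ha1 : a + 1 = k := by
        have : a + 1 ∈ ({k} : Set (Fin n)) := by rw [← ha']; simp
        exact this
      rw [ha1, hak]
    exact crown_add_one_ne hn a h'
  have huniv_notmem : (Set.univ : Set (Fin n)) ∉
      (Set.range (fun k : Fin n => ({k} : Set (Fin n))) ∪
       Set.range (fun a : Fin n => ({a, a + 1} : Set (Fin n)))) := by
    rintro (⟨k, hk⟩ | ⟨a, ha⟩)
    · have hk' : ({k} : Set (Fin n)) = Set.univ := hk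
      have h0' : (k + 1 : Fin n) ∈ ({k} : Set (Fin n)) := by rw [hk']; trivial
      exact crown_add_one_ne hn k h0'
    · have ha' : ({a, a + 1} : Set (Fin n)) = Set.univ := ha
      have h0' : (a + 2 : Fin n) ∈ ({a, a + 1} : Set (Fin n)) := by rw [ha']; trivial
      rcases h0' with h | h
      · exact crown_add_two_ne hn a h
      · have h'' : a + 2 = a + 1 := h
        have : a + 1 + 1 = a + 1 := by
          rw [show a + 1 + 1 = a + 2 from by open Fin.CommRing in ring]; exact h''
        exact crown_add_one_ne hn (a + 1) this
  have hempty_notmem : (∅ : Set (Fin n)) ∉ insert Set.univ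
      (Set.range (fun k : Fin n => ({k} : Set (Fin n))) ∪
       Set.range (fun a : Fin n => ({a, a + 1} : Set (Fin n)))) := by
    rintro (h | ⟨k, hk⟩ | ⟨a, ha⟩)
    · have : (0 : Fin n) ∈ (∅ : Set (Fin n)) := by rw [h]; trivial
      exact this
    · have hk' : ({k} : Set (Fin n)) = ∅ := hk
      have : k ∈ (∅ : Set (Fin n)) := by rw [← hk']; simp
      exact this
    · have ha' : ({a, a + 1} : Set (Fin n)) = ∅ := ha
      have : a ∈ (∅ : Set (Fin n)) := by rw [← ha']; simp
      exact this
  have hfin : ∀ s : Set (Set (Fin n)), s.Finite := fun s => Set.toFinite s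
  rw [Set.ncard_insert_of_notMem hempty_notmem (hfin _),
    Set.ncard_insert_of_notMem huniv_notmem (hfin _),
    Set.ncard_union_eq hdisj (hfin _) (hfin _), hc1, hc2]
  ring
end

section
/- Let G and H be finite simple graphs with at least 3 vertices each, and define the formal contexts 𝔾 = (V_G, E_G ∪ {{v} : v ∈ V_G} ∪ {∅}, ∈) and ℍ analogously. Then Ext(𝔾) = {{v} : v ∈ V_G} ∪ E_G ∪ {∅, V_G}, where edges are viewed as 2-element vertex sets. (This is the gadget underlying the NP-hardness reduction for full scale-measures.) -/
/-- The attribute collection of the graph context: all edges (as 2-element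
vertex sets), all singletons, and the empty set. -/
def GraphAttr {V : Type*} (G : SimpleGraph V) (S : Set V) : Prop :=
  (∃ u v : V, G.Adj u v ∧ S = {u, v}) ∨ (∃ v : V, S = {v}) ∨ S = ∅

/-- The formal context `𝔾 = (V_G, E_G ∪ {{v} : v ∈ V_G} ∪ {∅}, ∈)` of a graph
`G` with at least 3 vertices has as extents exactly the singletons, the edges,
`∅` and `V_G`. -/
theorem graph_context_extents {V : Type*} [Fintype V]
    (G : SimpleGraph V) (hV : 3 ≤ Fintype.card V) :
    ∀ X : Set V,
      IsExtent (fun (v : V) (S : {S : Set V // GraphAttr G S}) => v ∈ S.val) X ↔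
        (∃ v : V, X = {v}) ∨ (∃ u v : V, G.Adj u v ∧ X = {u, v}) ∨
          X = ∅ ∨ X = Set.univ := by
  intro X
  constructor
  · rintro ⟨B, rfl⟩
    set X := extentOf (fun (v : V) (S : {S : Set V // GraphAttr G S}) => v ∈ S.val) B with hXdef
    by_cases hB : B.Nonempty
    · obtain ⟨S₀, hS₀⟩ := hB
      have hsub : X ⊆ S₀.val := fun v hv => hv S₀ hS₀
      rcases S₀.2 with ⟨a, b, hab, hS⟩ | ⟨a, hS⟩ | hS
      · rw [hS] at hsub
        by_cases ha : a ∈ X <;> by_cases hb : b ∈ X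
        · refine Or.inr (Or.inl ⟨a, b, hab, Set.Subset.antisymm hsub ?_⟩)
          rintro v (rfl | rfl) <;> assumption
        · refine Or.inl ⟨a, Set.Subset.antisymm ?_ ?_⟩
          · intro v hv
            rcases hsub hv with rfl | rfl
            · rfl
            · exact absurd hv hb
          · rintro v rfl; exact ha
        · refine Or.inl ⟨b, Set.Subset.antisymm ?_ ?_⟩
          · intro v hv
            rcases hsub hv with rfl | rfl
            · exact absurd hv ha
            · rfl
          · rintro v rfl; exact hb
        · refine Or.inr (Or.inr (Or.inl (Set.eq_empty_iff_forall_notMem.mpr ?_)))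
          intro v hv
          rcases hsub hv with rfl | rfl
          · exact ha hv
          · exact hb hv
      · rw [hS] at hsub
        by_cases ha : a ∈ X
        · refine Or.inl ⟨a, Set.Subset.antisymm hsub ?_⟩
          rintro v rfl; exact ha
        · refine Or.inr (Or.inr (Or.inl (Set.eq_empty_iff_forall_notMem.mpr ?_)))
          intro v hv
          rcases hsub hv with rfl
          exact ha hv
      · rw [hS] at hsub
        exact Or.inr (Or.inr (Or.inl (Set.subset_empty_iff.mp hsub)))
    · rw [Set.not_nonempty_iff_eq_empty] at hB
      refine Or.inr (Or.inr (Or.inr ?_))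
      ext v
      simp [hXdef, extentOf, hB]
  · rintro (⟨v, rfl⟩ | ⟨u, v, huv, rfl⟩ | rfl | rfl)
    · exact ⟨{⟨{v}, Or.inr (Or.inl ⟨v, rfl⟩)⟩}, by ext w; simp [extentOf]⟩
    · exact ⟨{⟨{u, v}, Or.inl ⟨u, v, huv, rfl⟩⟩}, by ext w; simp [extentOf]⟩
    · exact ⟨{⟨∅, Or.inr (Or.inr rfl)⟩}, by ext w; simp [extentOf]⟩
    · exact ⟨∅, by ext w; simp [extentOf]⟩
end
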